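/- Let $(X,\mu)$ be a measure space, let $V\subseteq X$ be measurable, let $I\subseteq V$ be measurable, and let $f: X^n \to \mathbb{C}$ be a symmetric function (invariant under all permutations of its arguments) that is integrable over $V^n$ with respect to the product measure. Then for any constant $\alpha \in \mathbb{C}$, $\int_{V^n} \alpha^{\sigma(z_1,\dots,z_n)} f(z_1,\dots,z_n)\, d\mu^n = \sum_{j=0}^{n} \binom{n}{j}(\alpha-1)^j \int_{I^j \times V^{n-j}} f(z_1,\dots,z_n)\, d\mu^n$, where $\sigma(z_1,\dots,z_n)$ denotes the number of indices $i$ with $z_i \in I$. -/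

import Mathlib

open MeasureTheory Finset

/-- Lemma 1 of Pâţu–Korepin–Averin: for a symmetric integrable function `f` on `V^n`
and a constant `α`, the integral of `α^{σ(z)} f(z)` over `V^n` (where `σ(z)` counts the
coordinates lying in `I ⊆ V`) expands as a binomial sum of integrals over `I^j × V^{n-j}`. -/
theorem lenard_lemma {X : Type*} [MeasurableSpace X] (μ : Measure X) [SigmaFinite μ]
    (V I : Set X) (hV : MeasurableSet V) (hI : MeasurableSet I) (hIV : I ⊆ V)
    (n : ℕ) (f : (Fin n → X) → ℂ)
    (hsym : ∀ (π : Equiv.Perm (Fin n)) (z : Fin n → X), f (z ∘ π) = f z)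
    (hint : IntegrableOn f (Set.univ.pi fun _ : Fin n => V) (Measure.pi fun _ => μ))
    (α : ℂ) :
    ∫ z in Set.univ.pi (fun _ : Fin n => V),
        α ^ (Nat.card {i : Fin n // z i ∈ I}) * f z ∂(Measure.pi fun _ => μ)
      = ∑ j ∈ Finset.range (n + 1), (n.choose j : ℂ) * (α - 1) ^ j *
          ∫ z in Set.univ.pi (fun i : Fin n => if (i : ℕ) < j then I else V),
            f z ∂(Measure.pi fun _ => μ) := by
  classical
  set μn : Measure (Fin n → X) := Measure.pi fun _ => μ with hμn
  set Vn : Set (Fin n → X) := Set.univ.pi fun _ : Fin n => V with hVn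
  have hVnmeas : MeasurableSet Vn := MeasurableSet.univ_pi fun _ => hV
  set D : Finset (Fin n) → Set (Fin n → X) :=
    fun S => Set.univ.pi fun i => if i ∈ S then I else V with hDdef
  have hDmeas : ∀ S, MeasurableSet (D S) := fun S =>
    MeasurableSet.univ_pi fun i => by by_cases h : i ∈ S <;> simp [h, hI, hV]
  have hDsub : ∀ S, D S ⊆ Vn := by
    intro S z hz i _
    have := hz i (Set.mem_univ i)
    by_cases h : i ∈ S <;> simp only [h, if_true, if_false] at this
    · exact hIV this
    · exact this
  have hDint : ∀ S, IntegrableOn f (D S) μn := fun S => hint.mono_set (hDsub S)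
  -- Symmetry: the integral over `D S` depends only on `S.card`.
  have hBsym : ∀ S T : Finset (Fin n), S.card = T.card →
      (∫ z in D S, f z ∂μn) = ∫ z in D T, f z ∂μn := by
    intro S T hST
    have hcardc : Tᶜ.card = Sᶜ.card := by
      simp [Finset.card_compl, hST]
    have e1 : {a : Fin n // a ∈ T} ≃ {a : Fin n // a ∈ S} := Finset.equivOfCardEq hST.symm
    have e2 : {a : Fin n // a ∈ Tᶜ} ≃ {a : Fin n // a ∈ Sᶜ} := Finset.equivOfCardEq hcardc
    have e2' : {a : Fin n // ¬ a ∈ T} ≃ {a : Fin n // ¬ a ∈ S} :=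
      ((Equiv.subtypeEquivRight (fun a => (Finset.mem_compl).symm)).trans e2).trans
        (Equiv.subtypeEquivRight fun a => Finset.mem_compl)
    set π : Equiv.Perm (Fin n) :=
      ((Equiv.sumCompl (· ∈ T)).symm.trans
        ((Equiv.sumCongr e1 e2').trans (Equiv.sumCompl (· ∈ S)))) with hπ
    have hπmem : ∀ k : Fin n, π k ∈ S ↔ k ∈ T := by
      intro k
      by_cases h : k ∈ T
      · have : π k = (e1 ⟨k, h⟩ : {a : Fin n // a ∈ S}) := by
          simp [hπ, Equiv.sumCompl_symm_apply_of_pos h]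
        simp [this, h, (e1 ⟨k, h⟩).2]
      · have : π k = ((e2' ⟨k, h⟩ : {a : Fin n // ¬ a ∈ S}) : Fin n) := by
          simp [hπ, Equiv.sumCompl_symm_apply_of_neg h]
        simp [this, h, (e2' ⟨k, h⟩).2]
    set E : (Fin n → X) ≃ᵐ (Fin n → X) :=
      MeasurableEquiv.piCongrLeft (fun _ : Fin n => X) π with hE
    have hEmp : MeasurePreserving E μn μn := by
      rw [hE, hμn]
      exact measurePreserving_piCongrLeft (fun _ : Fin n => μ) π
    have hEapp : ∀ (z : Fin n → X) (i : Fin n), E z i = z (π.symm i) := by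
      intro z i
      conv_lhs => rw [← π.apply_symm_apply i]
      exact MeasurableEquiv.piCongrLeft_apply_apply (β := fun _ : Fin n => X) π z (π.symm i)
    have hEfun : ∀ z : Fin n → X, E z = z ∘ π.symm := fun z => funext fun i => hEapp z i
    have hpre : E ⁻¹' D S = D T := by
      ext z
      simp only [Set.mem_preimage, hDdef, Set.mem_pi, Set.mem_univ, true_imp_iff]
      constructor
      · intro h k
        have hk' := h (π k)
        rw [hEapp, π.symm_apply_apply] at hk'
        by_cases hk : k ∈ T
        · rw [if_pos hk]; rwa [if_pos ((hπmem k).2 hk)] at hk'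
        · rw [if_neg hk]; rwa [if_neg (fun hh => hk ((hπmem k).1 hh))] at hk'
      · intro h i
        rw [hEapp]
        have hi' := h (π.symm i)
        by_cases hi : i ∈ S
        · have ht : π.symm i ∈ T := by
            have hx := hπmem (π.symm i)
            rw [π.apply_symm_apply] at hx
            exact hx.1 hi
          rw [if_pos hi]; rwa [if_pos ht] at hi'
        · have ht : ¬ π.symm i ∈ T := by
            intro hc
            have hx := (hπmem (π.symm i)).2 hc
            rw [π.apply_symm_apply] at hx
            exact hi hx
          rw [if_neg hi]; rwa [if_neg ht] at hi'
    calc (∫ z in D S, f z ∂μn)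
        = ∫ z in E ⁻¹' D S, f (E z) ∂μn :=
          (hEmp.setIntegral_preimage_emb E.measurableEmbedding f (D S)).symm
      _ = ∫ z in D T, f z ∂μn := by
          rw [hpre]
          refine setIntegral_congr_fun (hDmeas T) fun z _ => ?_
          rw [hEfun]; exact hsym π.symm z
  -- Pointwise binomial expansion.
  have key : ∀ z : Fin n → X, α ^ (Nat.card {i : Fin n // z i ∈ I}) * f z
      = ∑ S ∈ (Finset.univ : Finset (Fin n)).powerset,
          (α - 1) ^ S.card * (Set.pi (↑S) fun _ => I).indicator f z := by
    intro z
    set T : Finset (Fin n) := Finset.univ.filter (fun i => z i ∈ I) with hT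
    have hcard : Nat.card {i : Fin n // z i ∈ I} = T.card := by
      rw [Nat.card_eq_fintype_card, Fintype.card_subtype]
    have hα : α ^ T.card = ∑ S ∈ T.powerset, (α - 1) ^ S.card := by
      have h := Finset.prod_add (fun _ : Fin n => (α - 1)) (fun _ => (1 : ℂ)) T
      simp only [Finset.prod_const, Finset.prod_const_one, one_pow, mul_one, sub_add_cancel] at h
      exact h
    rw [hcard, hα, Finset.sum_mul]
    symm
    refine Finset.sum_subset (Finset.powerset_mono.2 (Finset.subset_univ T)) ?_ |>.symm.trans ?_
    · intro S _ hS
      rw [Finset.mem_powerset] at hS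
      obtain ⟨i, hiS, hiI⟩ : ∃ i ∈ S, z i ∉ I := by
        by_contra hc
        push_neg at hc
        exact hS fun i hi => by simp [hT, hc i hi]
      have : z ∉ Set.pi (↑S) fun _ => I := fun hc => hiI (hc i hiS)
      simp [Set.indicator_of_notMem this]
    · refine Finset.sum_congr rfl fun S hS => ?_
      rw [Finset.mem_powerset] at hS
      have : z ∈ Set.pi (↑S) fun _ => I := fun i hi => by
        have := hS hi
        simpa [hT] using this
      rw [Set.indicator_of_mem this]
  -- Integrate the expansion.
  have hAmeas : ∀ S : Finset (Fin n), MeasurableSet (Set.pi (↑S) fun _ : Fin n => I) :=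
    fun S => MeasurableSet.pi (Set.to_countable _) fun _ _ => hI
  have hVA : ∀ S : Finset (Fin n), Vn ∩ (Set.pi (↑S) fun _ => I) = D S := by
    intro S
    ext z
    simp only [hVn, hDdef, Set.mem_inter_iff, Set.mem_pi, Set.mem_univ, true_imp_iff,
      Finset.mem_coe]
    constructor
    · rintro ⟨h1, h2⟩ i
      by_cases hi : i ∈ S
      · rw [if_pos hi]; exact h2 i hi
      · rw [if_neg hi]; exact h1 i
    · intro h
      constructor
      · intro i
        have := h i
        by_cases hi : i ∈ S <;> simp only [hi, if_true, if_false] at this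
        · exact hIV this
        · exact this
      · intro i hi
        have := h i
        simpa [hi] using this
  have step1 : (∫ z in Vn, α ^ (Nat.card {i : Fin n // z i ∈ I}) * f z ∂μn)
      = ∑ S ∈ (Finset.univ : Finset (Fin n)).powerset,
          (α - 1) ^ S.card * ∫ z in D S, f z ∂μn := by
    rw [show (fun z => α ^ (Nat.card {i : Fin n // z i ∈ I}) * f z)
        = fun z => ∑ S ∈ (Finset.univ : Finset (Fin n)).powerset,
            (α - 1) ^ S.card * (Set.pi (↑S) fun _ => I).indicator f z from funext key]
    rw [integral_finset_sum]
    · refine Finset.sum_congr rfl fun S _ => ?_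
      rw [integral_const_mul, setIntegral_indicator (hAmeas S), hVA S]
    · intro S _
      exact (hint.indicator (hAmeas S)).const_mul _
  rw [step1]
  -- Regroup by cardinality.
  rw [Finset.powerset_card_disjiUnion]; erw [Finset.sum_disjiUnion]
  rw [show (Finset.univ : Finset (Fin n)).card = n by simp]
  refine Finset.sum_congr rfl fun j hj => ?_
  have hjn : j ≤ n := Nat.lt_succ_iff.mp (Finset.mem_range.mp hj)
  set Tj : Finset (Fin n) := Finset.univ.filter (fun i => (i : ℕ) < j) with hTj
  have hTjcard : Tj.card = j := by
    have : Tj = Finset.map (Fin.castLEEmb hjn) Finset.univ := by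
      ext i
      simp only [hTj, Finset.mem_filter, Finset.mem_univ, true_and, Finset.mem_map,
        Fin.castLEEmb_apply]
      constructor
      · intro h
        exact ⟨⟨(i : ℕ), h⟩, by ext; simp⟩
      · rintro ⟨k, rfl⟩
        simp
    rw [this, Finset.card_map, Finset.card_univ, Fintype.card_fin]
  have hDTj : D Tj = Set.univ.pi (fun i : Fin n => if (i : ℕ) < j then I else V) := by
    simp [hDdef, hTj]
  have : ∀ S ∈ Finset.powersetCard j (Finset.univ : Finset (Fin n)),
      (α - 1) ^ S.card * ∫ z in D S, f z ∂μn
        = (α - 1) ^ j * ∫ z in Set.univ.pi (fun i : Fin n => if (i : ℕ) < j then I else V),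
            f z ∂μn := by
    intro S hS
    have hScard : S.card = j := (Finset.mem_powersetCard.mp hS).2
    rw [hScard, ← hDTj, hBsym S Tj (hScard.trans hTjcard.symm)]
  rw [Finset.sum_congr rfl this, Finset.sum_const, Finset.card_powersetCard,
    Finset.card_univ, Fintype.card_fin, nsmul_eq_mul, ← mul_assoc]
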